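/- On ℝⁿ, for any constant c ≥ 1, the function v(t,y) := (c − e^{−t})^{−n/2} exp(−‖y‖²/(4(c eᵗ − 1))) solves the drift heat equation ∂v/∂t = Δv − (1/2) y·∇v for t > 0 when c = 1, and for all t ≥ 0 when c > 1. -/

import Mathlib

noncomputable def pderiv7 {n : ℕ} (v : EuclideanSpace ℝ (Fin n) → ℝ) (i : Fin n)
    (y : EuclideanSpace ℝ (Fin n)) : ℝ :=
  fderiv ℝ v y (EuclideanSpace.single i 1)

noncomputable def lap7 {n : ℕ} (v : EuclideanSpace ℝ (Fin n) → ℝ)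
    (y : EuclideanSpace ℝ (Fin n)) : ℝ :=
  ∑ i, pderiv7 (pderiv7 v i) i y

section Aux
variable {n : ℕ}

lemma hd1 (A C : ℝ) (hA : A ≠ 0) (y : EuclideanSpace ℝ (Fin n)) :
    HasFDerivAt (fun y : EuclideanSpace ℝ (Fin n) => C * Real.exp (-‖y‖^2 / A))
      ((C * Real.exp (-‖y‖^2 / A) * (-2/A)) • (innerSL ℝ y)) y := by
  have h1 : HasFDerivAt (fun y : EuclideanSpace ℝ (Fin n) => -‖y‖^2 / A)
      ((-1/A) • (2 • (innerSL ℝ y))) y := by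
    have := (hasStrictFDerivAt_norm_sq y).hasFDerivAt
    have h2 := this.const_mul (-1/A)
    rw [show (fun y : EuclideanSpace ℝ (Fin n) => -‖y‖^2 / A) = fun y => (-1/A) * ‖y‖^2 from
      funext fun z => by ring]
    exact h2
  have h3 := h1.exp
  have h4 := h3.const_mul C
  refine h4.congr_fderiv ?_
  ext u
  simp
  ring

lemma hp1 (A C : ℝ) (hA : A ≠ 0) (i : Fin n) (y : EuclideanSpace ℝ (Fin n)) :
    pderiv7 (fun y : EuclideanSpace ℝ (Fin n) => C * Real.exp (-‖y‖^2 / A)) i y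
      = C * Real.exp (-‖y‖^2 / A) * ((-2/A) * y i) := by
  rw [pderiv7, (hd1 A C hA y).fderiv]
  simp [real_inner_comm, EuclideanSpace.inner_single_left, EuclideanSpace.inner_single_right]
  ring

lemma hp2 (A C : ℝ) (hA : A ≠ 0) (i : Fin n) (y : EuclideanSpace ℝ (Fin n)) :
    pderiv7 (pderiv7 (fun y : EuclideanSpace ℝ (Fin n) => C * Real.exp (-‖y‖^2 / A)) i) i y
      = C * Real.exp (-‖y‖^2 / A) * (((-2/A) * y i)^2 + (-2/A)) := by
  have he : pderiv7 (fun y : EuclideanSpace ℝ (Fin n) => C * Real.exp (-‖y‖^2 / A)) i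
      = fun y => (C * Real.exp (-‖y‖^2 / A)) * ((-2/A) * y i) := by
    funext z; exact hp1 A C hA i z
  rw [he]
  have hlin : HasFDerivAt (fun y : EuclideanSpace ℝ (Fin n) => (-2/A) * y i)
      ((-2/A) • (EuclideanSpace.proj i : EuclideanSpace ℝ (Fin n) →L[ℝ] ℝ)) y :=
    ((EuclideanSpace.proj i : EuclideanSpace ℝ (Fin n) →L[ℝ] ℝ).hasFDerivAt (x := y)).const_mul _
  have hmul : HasFDerivAt (fun y : EuclideanSpace ℝ (Fin n) => C * Real.exp (-‖y‖^2 / A) * ((-2/A) * y i)) _ y :=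
    (hd1 A C hA y).mul hlin
  rw [pderiv7, hmul.fderiv]
  simp [real_inner_comm, EuclideanSpace.inner_single_left, EuclideanSpace.inner_single_right,
    EuclideanSpace.single_apply, PiLp.proj_apply]
  ring

lemma norm_sq_sum (y : EuclideanSpace ℝ (Fin n)) : ∑ i, (y i)^2 = ‖y‖^2 := by
  rw [← real_inner_self_eq_norm_sq]
  simp [PiLp.inner_apply, sq]
  rw [← sq, EuclideanSpace.norm_sq_eq]; simp [sq, Real.norm_eq_abs]

lemma spatial (A C : ℝ) (hA : A ≠ 0) (y : EuclideanSpace ℝ (Fin n)) :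
    lap7 (fun y : EuclideanSpace ℝ (Fin n) => C * Real.exp (-‖y‖^2 / A)) y
      - (1/2) * ∑ i, y i * pderiv7 (fun y : EuclideanSpace ℝ (Fin n) => C * Real.exp (-‖y‖^2 / A)) i y
      = C * Real.exp (-‖y‖^2 / A) * ((4/A^2) * ‖y‖^2 - 2*n/A + ‖y‖^2/A) := by
  set E := Real.exp (-‖y‖^2 / A) with hE
  have h1 : lap7 (fun y : EuclideanSpace ℝ (Fin n) => C * Real.exp (-‖y‖^2 / A)) y
      = C * E * ((4/A^2) * ‖y‖^2 - 2*n/A) := by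
    rw [lap7]
    calc ∑ i, pderiv7 (pderiv7 (fun y : EuclideanSpace ℝ (Fin n) => C * Real.exp (-‖y‖^2 / A)) i) i y
        = ∑ i, (C * E * (4/A^2) * (y i)^2 + C * E * (-2/A)) := by
          refine Finset.sum_congr rfl fun i _ => ?_
          rw [hp2 A C hA i y]; ring
      _ = C * E * (4/A^2) * (∑ i, (y i)^2) + (n : ℝ) * (C * E * (-2/A)) := by
          rw [Finset.sum_add_distrib, ← Finset.mul_sum, Finset.sum_const, Finset.card_univ,
            Fintype.card_fin, nsmul_eq_mul]
      _ = C * E * ((4/A^2) * ‖y‖^2 - 2*n/A) := by rw [norm_sq_sum]; ring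
  have h2 : ∑ i, y i * pderiv7 (fun y : EuclideanSpace ℝ (Fin n) => C * Real.exp (-‖y‖^2 / A)) i y
      = C * E * (-2/A) * ‖y‖^2 := by
    calc ∑ i, y i * pderiv7 (fun y : EuclideanSpace ℝ (Fin n) => C * Real.exp (-‖y‖^2 / A)) i y
        = ∑ i, C * E * (-2/A) * (y i)^2 := by
          refine Finset.sum_congr rfl fun i _ => ?_
          rw [hp1 A C hA i y]; ring
      _ = C * E * (-2/A) * ‖y‖^2 := by rw [← Finset.mul_sum, norm_sq_sum]
  rw [h1, h2]; ring

lemma key (n : ℕ) (c t : ℝ) (ha : 0 < c * Real.exp t - 1) (y : EuclideanSpace ℝ (Fin n)) :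
    deriv (fun s => (c - Real.exp (-s)) ^ (-(n : ℝ) / 2)
        * Real.exp (-‖y‖ ^ 2 / (4 * (c * Real.exp s - 1)))) t
      = lap7 (fun y : EuclideanSpace ℝ (Fin n) => (c - Real.exp (-t)) ^ (-(n : ℝ) / 2)
            * Real.exp (-‖y‖ ^ 2 / (4 * (c * Real.exp t - 1)))) y
        - (1/2) * ∑ i, y i * pderiv7 (fun y : EuclideanSpace ℝ (Fin n) =>
            (c - Real.exp (-t)) ^ (-(n : ℝ) / 2)
            * Real.exp (-‖y‖ ^ 2 / (4 * (c * Real.exp t - 1)))) i y := by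
  set a := c * Real.exp t - 1 with hadef
  set K := ‖y‖^2 with hK
  have hba : c - Real.exp (-t) = Real.exp (-t) * a := by
    have h0 : Real.exp (-t) * Real.exp t = 1 := by rw [← Real.exp_add]; simp
    rw [hadef]; linear_combination (-c) * h0
  have hb : 0 < c - Real.exp (-t) := by rw [hba]; positivity
  set p : ℝ := -(n : ℝ)/2 with hp
  -- time derivative
  have h1 : HasDerivAt (fun s => c - Real.exp (-s)) (Real.exp (-t)) t := by
    have := ((Real.hasDerivAt_exp (-t)).comp t ((hasDerivAt_id t).neg)).const_sub c
    simpa using this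
  have h2 := h1.rpow_const (p := p) (Or.inl hb.ne')
  have h3 : HasDerivAt (fun s => 4 * (c * Real.exp s - 1)) (4 * (c * Real.exp t)) t :=
    (((Real.hasDerivAt_exp t).const_mul c).sub_const 1).const_mul 4
  have h4 : HasDerivAt (fun s => -K / (4 * (c * Real.exp s - 1))) _ t := (hasDerivAt_const t (-K)).div h3 (by positivity : 4 * (c * Real.exp t - 1) ≠ 0)
  have h5 := h4.exp
  have h6 : HasDerivAt (fun s => (c - Real.exp (-s)) ^ p * Real.exp (-K / (4 * (c * Real.exp s - 1)))) _ t :=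
    h2.mul h5
  rw [show (fun s => (c - Real.exp (-s)) ^ p * Real.exp (-‖y‖ ^ 2 / (4 * (c * Real.exp s - 1))))
      = fun s => (c - Real.exp (-s)) ^ p * Real.exp (-K / (4 * (c * Real.exp s - 1))) from rfl] at h6 ⊢
  rw [h6.deriv]
  rw [spatial (4 * a) ((c - Real.exp (-t)) ^ p) (by positivity) y]
  -- algebra
  have hrp : (c - Real.exp (-t)) ^ (p - 1) = (c - Real.exp (-t)) ^ p / (c - Real.exp (-t)) := by
    rw [eq_div_iff hb.ne', ← Real.rpow_add_one hb.ne', sub_add_cancel]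
  have hExpt : Real.exp (-t) / (c - Real.exp (-t)) = 1 / a := by
    rw [hba]; rw [div_mul_eq_div_div]; rw [div_self (Real.exp_pos (-t)).ne']
  have hce : c * Real.exp t = a + 1 := by rw [hadef]; ring
  rw [hrp, hce, ← hK]
  have hane : a ≠ 0 := ha.ne'
  have hbne : c - Real.exp (-t) ≠ 0 := hb.ne'
  simp only [add_sub_cancel_right]
  rw [hba]
  have he : Real.exp (-t) ≠ 0 := Real.exp_ne_zero _
  field_simp
  ring

end Aux

/-- The function `v(t,y) = (c-e^{-t})^{-n/2} exp(-‖y‖²/(4(ce^t-1)))` solves the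
drift heat equation `∂v/∂t = Δv - (1/2) y·∇v` for `t > 0` when `c = 1`, and for
all `t ≥ 0` when `c > 1`. -/
theorem stmt_7 (n : ℕ) (c : ℝ) (hc : 1 ≤ c)
    (v : ℝ → EuclideanSpace ℝ (Fin n) → ℝ)
    (hv : v = fun t y => (c - Real.exp (-t)) ^ (-(n : ℝ) / 2)
        * Real.exp (-‖y‖ ^ 2 / (4 * (c * Real.exp t - 1)))) :
    (c = 1 → ∀ (t : ℝ), 0 < t → ∀ (y : EuclideanSpace ℝ (Fin n)),
      deriv (fun s => v s y) t
        = lap7 (v t) y - (1 / 2) * ∑ i, y i * pderiv7 (v t) i y) ∧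
    (1 < c → ∀ (t : ℝ), 0 ≤ t → ∀ (y : EuclideanSpace ℝ (Fin n)),
      deriv (fun s => v s y) t
        = lap7 (v t) y - (1 / 2) * ∑ i, y i * pderiv7 (v t) i y) := by
  subst hv
  constructor
  · rintro rfl t ht y
    have ha : 0 < 1 * Real.exp t - 1 := by
      have := Real.one_lt_exp_iff.mpr ht; linarith
    exact key n 1 t ha y
  · intro hc1 t ht y
    have ha : 0 < c * Real.exp t - 1 := by
      have h1 : 1 ≤ Real.exp t := Real.one_le_exp ht
      nlinarith
    exact key n c t ha y
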